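/- Let S*, E_n*, ..., E_1*, I* be real numbers satisfying the equilibrium relations μ·(1 − S*) = β̄·S*·I*, β̄·S*·I* = (λ_n+μ)·E_n*, E_i* = (1/(λ_i+μ))·p̄_i·λ_{i+1}·E_{i+1}* for i = n−1,...,1, and I* = (1/(γ+μ))·Σ_{i=0}^{n−1} p_i·λ_{i+1}·E_{i+1}*. Then I* = (μ/β̄)·(1 − S*)·R_0; moreover, if additionally S* ≠ 1, then I* = (μ/β̄)·(R_0 − 1) and S* = 1/R_0. -/

import Mathlib

/-- At equilibrium, `I* = (μ/β̄)(1 − S*) R0`; moreover, if `S* ≠ 1`, then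
`I* = (μ/β̄)(R0 − 1)` and `S* = 1/R0`. -/
theorem coxian_seir_equilibrium_infectious_formula
    (n : ℕ) (hn : 1 ≤ n) (μ γ β : ℝ) (hμ : 0 < μ) (hγ : 0 < γ) (hβ : 0 < β)
    (lam p : ℕ → ℝ) (hlam : ∀ i, 1 ≤ i → i ≤ n → 0 < lam i)
    (hp0 : p 0 = 1) (hp : ∀ i, 1 ≤ i → i ≤ n - 1 → 0 < p i ∧ p i < 1)
    (R0 : ℝ)
    (hR0 : R0 = β / (γ + μ) * ∑ i ∈ Finset.range n,
      (p i * ∏ j ∈ Finset.Icc 1 (n - 1 - i), (1 - p (j + i))) *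
        ∏ k ∈ Finset.Icc 1 (n - i), lam (n + 1 - k) / (lam (n + 1 - k) + μ))
    (S Istar : ℝ) (E : ℕ → ℝ)
    (h1 : μ * (1 - S) = β * S * Istar)
    (h2 : β * S * Istar = (lam n + μ) * E n)
    (h3 : ∀ i, 1 ≤ i → i ≤ n - 1 →
      E i = 1 / (lam i + μ) * ((1 - p i) * lam (i + 1) * E (i + 1)))
    (h4 : Istar = 1 / (γ + μ) * ∑ i ∈ Finset.range n, p i * lam (i + 1) * E (i + 1)) :
    Istar = μ / β * (1 - S) * R0 ∧
    (S ≠ 1 → Istar = μ / β * (R0 - 1) ∧ S = 1 / R0) := by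
  have hγμ : (0:ℝ) < γ + μ := by linarith
  -- reindexing the p-product
  have hprod1 : ∀ i ∈ Finset.range n,
      (∏ j ∈ Finset.Icc 1 (n - 1 - i), (1 - p (j + i))) =
      ∏ j ∈ Finset.Icc (i+1) (n-1), (1 - p j) := by
    intro i hi
    rw [Finset.mem_range] at hi
    have hset : Finset.Icc (i+1) (n-1)
        = (Finset.Icc 1 (n-1-i)).map (addRightEmbedding i) := by
      rw [Finset.map_add_right_Icc]
      congr 1 <;> omega
    rw [hset, Finset.prod_map]
    rfl
  -- reindexing the lam-product
  have hprod2 : ∀ i ∈ Finset.range n,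
      (∏ k ∈ Finset.Icc 1 (n - i), lam (n + 1 - k) / (lam (n + 1 - k) + μ)) =
      ∏ m ∈ Finset.Icc (i+1) n, lam m / (lam m + μ) := by
    intro i hi
    rw [Finset.mem_range] at hi
    refine Finset.prod_nbij' (fun k => n + 1 - k) (fun m => n + 1 - m)
      ?_ ?_ ?_ ?_ ?_
    · intro a ha; simp only [Finset.mem_Icc] at *; omega
    · intro a ha; simp only [Finset.mem_Icc] at *; omega
    · intro a ha; simp only [Finset.mem_Icc] at *; omega
    · intro a ha; simp only [Finset.mem_Icc] at *; omega
    · intro a ha; rfl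
  -- the key recursion, descending induction
  have key : ∀ d m, m = n - d → 1 ≤ m →
      lam m * E m = (lam n + μ) * E n *
        (∏ j ∈ Finset.Icc m (n-1), (1 - p j)) *
        ∏ k ∈ Finset.Icc m n, lam k / (lam k + μ) := by
    intro d
    induction d with
    | zero =>
      intro m hm h1m
      have hmn : m = n := by omega
      subst hmn
      have hne : lam m + μ ≠ 0 := by
        have := hlam m h1m (le_refl m); positivity
      rw [Finset.Icc_eq_empty (by omega : ¬ m ≤ m - 1), Finset.Icc_self]
      simp only [Finset.prod_empty, Finset.prod_singleton, mul_one]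
      field_simp
    | succ d ih =>
      intro m hm h1m
      have hm1 : m + 1 = n - d := by omega
      have hmn : m ≤ n - 1 := by omega
      have hIH := ih (m+1) hm1 (by omega)
      have hne : lam m + μ ≠ 0 := by
        have := hlam m h1m (by omega); positivity
      have e1 : Finset.Icc m (n-1) = insert m (Finset.Icc (m+1) (n-1)) := by
        ext x; simp only [Finset.mem_Icc, Finset.mem_insert]; omega
      have e2 : Finset.Icc m n = insert m (Finset.Icc (m+1) n) := by
        ext x; simp only [Finset.mem_Icc, Finset.mem_insert]; omega
      have hstep : lam m * E m
          = lam m / (lam m + μ) * ((1 - p m) * (lam (m+1) * E (m+1))) := by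
        rw [h3 m h1m hmn]; ring
      rw [hstep, e1, e2,
        Finset.prod_insert (by simp only [Finset.mem_Icc]; omega),
        Finset.prod_insert (by simp only [Finset.mem_Icc]; omega), hIH]
      ring
  -- termwise identity
  have hterm : ∀ i ∈ Finset.range n,
      p i * lam (i+1) * E (i+1) = (lam n + μ) * E n *
        ((p i * ∏ j ∈ Finset.Icc 1 (n - 1 - i), (1 - p (j + i))) *
          ∏ k ∈ Finset.Icc 1 (n - i), lam (n + 1 - k) / (lam (n + 1 - k) + μ)) := by
    intro i hi
    have hi' := Finset.mem_range.mp hi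
    rw [hprod1 i hi, hprod2 i hi]
    have hk := key (n - (i+1)) (i+1) (by omega) (by omega)
    calc p i * lam (i+1) * E (i+1) = p i * (lam (i+1) * E (i+1)) := by ring
      _ = _ := by rw [hk]; ring
  have hsum : ∑ i ∈ Finset.range n, p i * lam (i+1) * E (i+1)
      = (lam n + μ) * E n * ∑ i ∈ Finset.range n,
        ((p i * ∏ j ∈ Finset.Icc 1 (n - 1 - i), (1 - p (j + i))) *
          ∏ k ∈ Finset.Icc 1 (n - i), lam (n + 1 - k) / (lam (n + 1 - k) + μ)) := by
    rw [Finset.mul_sum]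
    exact Finset.sum_congr rfl hterm
  have hE : μ * (1 - S) = (lam n + μ) * E n := h1.trans h2
  have hmain : Istar = μ / β * (1 - S) * R0 := by
    rw [h4, hsum, hR0, ← hE]
    have hb : β ≠ 0 := ne_of_gt hβ
    have hg : γ + μ ≠ 0 := ne_of_gt hγμ
    field_simp
  refine ⟨hmain, fun hS => ?_⟩
  have hS1 : 1 - S ≠ 0 := fun h => hS (by linarith)
  have hμS : μ * (1 - S) ≠ 0 := mul_ne_zero (ne_of_gt hμ) hS1
  have hSR : S * R0 = 1 := by
    have h' : μ * (1 - S) * (S * R0) = μ * (1 - S) * 1 := by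
      rw [mul_one]
      calc μ * (1 - S) * (S * R0) = β * S * (μ / β * (1 - S) * R0) := by
            field_simp
        _ = β * S * Istar := by rw [hmain]
        _ = μ * (1 - S) := h1.symm
    exact mul_left_cancel₀ hμS h'
  have hR0ne : R0 ≠ 0 := by
    intro h; rw [h, mul_zero] at hSR; exact one_ne_zero hSR.symm
  constructor
  · rw [hmain]
    linear_combination (-(μ/β)) * hSR
  · rw [eq_div_iff hR0ne]
    exact hSR
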